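/- arXiv:2310.15527 — 4 statements merged into one kernel-verified Lean document; each statement's English description precedes it below -/
import Mathlib

section
/- Let U be an infinite type, k ∈ ω, and let X be a finite family of finite subsets of U, each of cardinality at most k. Then there exist a family X* of subsets of U and a bijection i : X → X* such that: (1) every member of X* has cardinality exactly k; (2) for all x ∈ X, x ⊆ i(x); (3) for all x ∈ X, (i(x) \ x) ∩ ⋃X = ∅; and (4) for every X₀ ⊆ X, X₀ is a sunflower if and only if the image i[X₀] is a sunflower. -/
/-- A family of sets is a sunflower if all pairwise intersections of
distinct members agree. -/
def IsSunflower {U : Type*} (X : Set (Set U)) : Prop :=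
  ∀ A₀ ∈ X, ∀ A₁ ∈ X, ∀ B₀ ∈ X, ∀ B₁ ∈ X,
    A₀ ≠ A₁ → B₀ ≠ B₁ → A₀ ∩ A₁ = B₀ ∩ B₁

/-- Any finite family `X` of finite subsets of an infinite type, each of
cardinality at most `k`, can be enlarged, set by set, to a family `X*` of sets
of cardinality exactly `k`, where the added points avoid `⋃ X`, in such a way
that sunflowers among subfamilies are exactly preserved. -/
theorem pad_family {U : Type*} [Infinite U] (k : ℕ) (X : Finset (Set U))
    (hX : ∀ x ∈ X, x.Finite ∧ x.ncard ≤ k) :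
    ∃ (Xstar : Finset (Set U)) (i : Set U → Set U),
      Set.BijOn i (X : Set (Set U)) (Xstar : Set (Set U)) ∧
      (∀ x ∈ Xstar, x.Finite ∧ x.ncard = k) ∧
      (∀ x ∈ X, x ⊆ i x) ∧
      (∀ x ∈ X, (i x \ x) ∩ ⋃₀ (X : Set (Set U)) = ∅) ∧
      (∀ X₀ ⊆ X, (IsSunflower (X₀ : Set (Set U)) ↔
        IsSunflower (i '' (X₀ : Set (Set U))))) := by
  classical
  set S : Set U := ⋃₀ (X : Set (Set U)) with hS
  have hSfin : S.Finite := Set.Finite.sUnion X.finite_toSet (fun t ht => (hX t ht).1)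
  have hScinf : Sᶜ.Infinite := hSfin.infinite_compl
  set D : Finset (Set U × ℕ) := X ×ˢ Finset.range k with hD
  let e : {p // p ∈ D} ↪ ↥Sᶜ :=
    ((Fintype.equivFin _).toEmbedding.trans (Fin.valEmbedding)).trans hScinf.natEmbedding
  let f : Set U × ℕ → U := fun p => if h : p ∈ D then (e ⟨p, h⟩ : U) else Classical.arbitrary U
  have hfS : ∀ p ∈ D, f p ∈ Sᶜ := by
    intro p hp
    simp only [f, dif_pos hp]
    exact (e ⟨p, hp⟩).2
  have hfinj : ∀ p ∈ D, ∀ q ∈ D, f p = f q → p = q := by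
    intro p hp q hq h
    simp only [f, dif_pos hp, dif_pos hq] at h
    have := e.injective (Subtype.ext h)
    exact congrArg Subtype.val this
  -- the padding sets
  set pad : Set U → Set U := fun x => f '' ((fun j => (x, j)) '' ↑(Finset.range (k - x.ncard)))
    with hpad
  set i : Set U → Set U := fun x => x ∪ pad x with hi
  have hxS : ∀ x ∈ X, x ⊆ S := fun x hx => Set.subset_sUnion_of_mem hx
  have hmemD : ∀ x ∈ X, ∀ j ∈ Finset.range (k - x.ncard), (x, j) ∈ D := by
    intro x hx j hj
    rw [Finset.mem_range] at hj
    exact Finset.mem_product.2 ⟨hx, Finset.mem_range.2 (lt_of_lt_of_le hj (Nat.sub_le k _))⟩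
  have hpadSc : ∀ x ∈ X, pad x ⊆ Sᶜ := by
    rintro x hx u ⟨p, ⟨j, hj, rfl⟩, rfl⟩
    exact hfS _ (hmemD x hx j (by simpa using hj))
  have hpadfin : ∀ x, (pad x).Finite := fun x =>
    ((Finset.range _).finite_toSet.image _).image _
  have hpadcard : ∀ x ∈ X, (pad x).ncard = k - x.ncard := by
    intro x hx
    rw [hpad]
    rw [Set.ncard_image_of_injOn, Set.ncard_image_of_injOn, Set.ncard_coe_finset,
      Finset.card_range]
    · intro a _ b _ h; exact (Prod.mk.injEq _ _ _ _ ▸ h).2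
    · rintro p ⟨j, hj, rfl⟩ q ⟨j', hj', rfl⟩ h
      exact hfinj _ (hmemD x hx j (by simpa using hj)) _ (hmemD x hx j' (by simpa using hj')) h
  have hpaddisj : ∀ x ∈ X, ∀ y ∈ X, x ≠ y → pad x ∩ pad y = ∅ := by
    intro x hx y hy hxy
    ext u
    simp only [Set.mem_inter_iff, Set.mem_empty_iff_false, iff_false, not_and]
    rintro ⟨p, ⟨j, hj, rfl⟩, rfl⟩ ⟨q, ⟨j', hj', rfl⟩, h⟩
    have := hfinj _ (hmemD y hy j' (by simpa using hj')) _ (hmemD x hx j (by simpa using hj)) h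
    exact hxy ((Prod.mk.injEq _ _ _ _ ▸ this).1).symm
  have hsub : ∀ x ∈ X, x ⊆ i x := fun x _ => Set.subset_union_left
  have hkey : ∀ x ∈ X, ∀ y ∈ X, x ≠ y → i x ∩ i y = x ∩ y := by
    intro x hx y hy hxy
    apply subset_antisymm
    · rintro u ⟨hu1, hu2⟩
      rcases hu1 with hu1 | hu1 <;> rcases hu2 with hu2 | hu2
      · exact ⟨hu1, hu2⟩
      · exact absurd (hxS x hx hu1) (hpadSc y hy hu2)
      · exact absurd (hxS y hy hu2) (hpadSc x hx hu1)
      · have := hpaddisj x hx y hy hxy ▸ Set.mem_inter hu1 hu2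
        exact this.elim
    · exact Set.inter_subset_inter (hsub x hx) (hsub y hy)
  have hrec : ∀ x ∈ X, i x ∩ S = x := by
    intro x hx
    rw [hi]
    simp only [Set.union_inter_distrib_right]
    rw [Set.inter_eq_left.2 (hxS x hx)]
    have : pad x ∩ S = ∅ := by
      rw [Set.eq_empty_iff_forall_notMem]
      rintro u ⟨h1, h2⟩
      exact hpadSc x hx h1 h2
    rw [this, Set.union_empty]
  have hinj : Set.InjOn i (X : Set (Set U)) := by
    intro x hx y hy h
    rw [← hrec x hx, ← hrec y hy, h]
  refine ⟨X.image i, i, ⟨?_, hinj, ?_⟩, ?_, hsub, ?_, ?_⟩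
  · intro x hx
    simp only [Finset.coe_image]
    exact Set.mem_image_of_mem i hx
  · intro y hy
    simp only [Finset.coe_image] at hy
    exact hy
  · intro y hy
    simp only [Finset.mem_image] at hy
    obtain ⟨x, hx, rfl⟩ := hy
    have hxfin := (hX x hx).1
    have hfin : (i x).Finite := hxfin.union (hpadfin x)
    refine ⟨hfin, ?_⟩
    have hdisj : Disjoint x (pad x) := by
      rw [Set.disjoint_left]
      intro u hu hu'
      exact hpadSc x hx hu' (hxS x hx hu)
    rw [hi]
    rw [Set.ncard_union_eq hdisj hxfin (hpadfin x), hpadcard x hx]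
    exact Nat.add_sub_cancel' (hX x hx).2
  · intro x hx
    rw [Set.eq_empty_iff_forall_notMem]
    rintro u ⟨⟨hu1, hu2⟩, hu3⟩
    rcases hu1 with h | h
    · exact hu2 h
    · exact hpadSc x hx h hu3
  · intro X₀ hX₀
    have hX₀' : (X₀ : Set (Set U)) ⊆ (X : Set (Set U)) := Finset.coe_subset.2 hX₀
    constructor
    · intro hsf A₀' hA₀ A₁' hA₁ B₀' hB₀ B₁' hB₁ hA hB
      obtain ⟨A₀, hA₀m, rfl⟩ := hA₀
      obtain ⟨A₁, hA₁m, rfl⟩ := hA₁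
      obtain ⟨B₀, hB₀m, rfl⟩ := hB₀
      obtain ⟨B₁, hB₁m, rfl⟩ := hB₁
      have hA' : A₀ ≠ A₁ := fun h => hA (by rw [h])
      have hB' : B₀ ≠ B₁ := fun h => hB (by rw [h])
      rw [hkey A₀ (hX₀' hA₀m) A₁ (hX₀' hA₁m) hA',
        hkey B₀ (hX₀' hB₀m) B₁ (hX₀' hB₁m) hB']
      exact hsf A₀ hA₀m A₁ hA₁m B₀ hB₀m B₁ hB₁m hA' hB'
    · intro hsf A₀ hA₀ A₁ hA₁ B₀ hB₀ B₁ hB₁ hA hB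
      have hA' : i A₀ ≠ i A₁ := fun h => hA (hinj (hX₀' hA₀) (hX₀' hA₁) h)
      have hB' : i B₀ ≠ i B₁ := fun h => hB (hinj (hX₀' hB₀) (hX₀' hB₁) h)
      have := hsf (i A₀) (Set.mem_image_of_mem i hA₀) (i A₁) (Set.mem_image_of_mem i hA₁)
        (i B₀) (Set.mem_image_of_mem i hB₀) (i B₁) (Set.mem_image_of_mem i hB₁) hA' hB'
      rw [hkey A₀ (hX₀' hA₀) A₁ (hX₀' hA₁) hA, hkey B₀ (hX₀' hB₀) B₁ (hX₀' hB₁) hB] at this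
      exact this
end

section
/- Let L be the first-order language consisting of a single unary function symbol f. For every k ≥ 1 there is a countably infinite, locally finite L-structure M_k such that: (1) M_k is ultrahomogeneous; (2) M_k has the strong amalgamation property; (3) M_k is totally categorical; and (4) for every n ∈ ω, every family X of finitely generated substructures of M_k, each of cardinality at most k, with |X| ≥ n, contains a subfamily of size n that is a sunflower (i.e., SF[M_k](n,k) = n). -/
open FirstOrder FirstOrder.Language

universe w

/-- A structure is locally finite if every finite subset is contained in a
finite substructure. -/
def LocallyFiniteStr (L : FirstOrder.Language) (M : Type*) [L.Structure M] : Prop :=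
  ∀ s : Set M, s.Finite → ∃ S : L.Substructure M, s ⊆ (S : Set M) ∧ (S : Set M).Finite

/-- The strong amalgamation property over finitely generated substructures. -/
def HasSAP (L : FirstOrder.Language) (M : Type*) [L.Structure M] : Prop :=
  ∀ (A B C : L.Substructure M), A.FG → B.FG → C.FG →
    ∀ (i₀ : A ↪[L] B) (j₀ : A ↪[L] C),
      ∃ (i₁ : B ↪[L] M) (j₁ : C ↪[L] M),
        i₁.comp i₀ = j₁.comp j₀ ∧
        Set.range ⇑i₁ ∩ Set.range ⇑j₁ = Set.range ⇑(i₁.comp i₀)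

/-- Totally categorical: the complete first-order theory of the structure is
`κ`-categorical for every infinite cardinal `κ`. -/
def TotallyCategorical (L : FirstOrder.Language) (M : Type*) [L.Structure M] : Prop :=
  ∀ κ : Cardinal.{w}, Cardinal.aleph0 ≤ κ → κ.Categorical (L.completeTheory M)

/-- A family of substructures is a sunflower if all pairwise intersections of the
underlying sets of distinct members agree. -/
def SunflowerSub (L : FirstOrder.Language) (M : Type*) [L.Structure M]
    (X : Set (L.Substructure M)) : Prop :=
  ∀ A₀ ∈ X, ∀ A₁ ∈ X, ∀ B₀ ∈ X, ∀ B₁ ∈ X,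
    A₀ ≠ A₁ → B₀ ≠ B₁ → (A₀ : Set M) ∩ (A₁ : Set M) = (B₀ : Set M) ∩ (B₁ : Set M)

/-- The first-order language consisting of a single unary function symbol `f`. -/
def unaryLang : FirstOrder.Language :=
  ⟨fun n => match n with | 1 => PUnit | _ => Empty, fun _ => Empty⟩

/-- The `unaryLang`-structure on `ℕ × ZMod k` in which the unary function symbol
is interpreted as `(i, j) ↦ (i, j + 1)`: the disjoint union of `ω`-many
`f`-cycles of length `k`. -/
instance cycleStr (k : ℕ) : unaryLang.Structure (ℕ × ZMod k) where
  funMap {n} f x :=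
    match n, f, x with
    | 1, _, x => ((x 0).1, (x 0).2 + 1)
  RelMap {_} r _ := r.elim

open FirstOrder.Language.Structure

set_option linter.unusedSectionVars false
namespace SFP
def uf : unaryLang.Functions 1 := PUnit.unit

/-- The shift map of any `unaryLang`-structure. -/
def sh (N : Type*) [unaryLang.Structure N] : N → N :=
  fun x => funMap uf (fun _ => x)

lemma sh_cycle (k : ℕ) (x : ℕ × ZMod k) : sh (ℕ × ZMod k) x = (x.1, x.2 + 1) := rfl

lemma emb_sh {N P : Type*} [unaryLang.Structure N] [unaryLang.Structure P]
    (e : N ↪[unaryLang] P) (x : N) : e (sh N x) = sh P (e x) := by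
  exact e.map_fun uf (fun _ => x)

lemma emb_sh_iter {N P : Type*} [unaryLang.Structure N] [unaryLang.Structure P]
    (e : N ↪[unaryLang] P) (m : ℕ) (x : N) : e ((sh N)^[m] x) = (sh P)^[m] (e x) := by
  induction m with
  | zero => rfl
  | succ m ih =>
      rw [Function.iterate_succ_apply', Function.iterate_succ_apply', emb_sh, ih]

/-- Iterated application of the function symbol to a term. -/
def itTerm {α : Type*} (n : ℕ) (t : unaryLang.Term α) : unaryLang.Term α :=
  Nat.rec t (fun _ s => Term.func uf (fun _ => s)) n

lemma realize_itTerm {N : Type*} [unaryLang.Structure N] {α : Type*} (v : α → N)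
    (n : ℕ) (t : unaryLang.Term α) :
    (itTerm n t).realize v = (sh N)^[n] (t.realize v) := by
  induction n with
  | zero => rfl
  | succ n ih =>
      rw [Function.iterate_succ_apply']
      show funMap uf (fun _ => (itTerm n t).realize v) = _
      rw [ih]; rfl

/-- Sentence saying the shift has period dividing `n`. -/
def perSent (n : ℕ) : unaryLang.Sentence := ∀' (itTerm n (&0) =' &0)

/-- Sentence saying the shift has no fixed point of `sh^[n]`. -/
def nperSent (n : ℕ) : unaryLang.Sentence := ∀' ∼(itTerm n (&0) =' &0)

lemma realize_perSent {N : Type*} [unaryLang.Structure N] (n : ℕ) :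
    (N ⊨ perSent n) ↔ ∀ x : N, (sh N)^[n] x = x := by
  simp [perSent, Sentence.Realize, Formula.Realize, BoundedFormula.realize_all,
    BoundedFormula.realize_bdEqual, realize_itTerm, Term.realize, Fin.snoc]

lemma realize_nperSent {N : Type*} [unaryLang.Structure N] (n : ℕ) :
    (N ⊨ nperSent n) ↔ ∀ x : N, (sh N)^[n] x ≠ x := by
  simp [nperSent, Sentence.Realize, Formula.Realize, BoundedFormula.realize_all,
    BoundedFormula.realize_not, BoundedFormula.realize_bdEqual, realize_itTerm, Term.realize, Fin.snoc]

section Decomp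
variable {k : ℕ} [NeZero k] {N : Type*} [unaryLang.Structure N]

lemma sh_iter_mul (hNk : ∀ x : N, (sh N)^[k] x = x) (q : ℕ) (x : N) :
    (sh N)^[k * q] x = x := by
  induction q with
  | zero => rfl
  | succ q ih =>
      rw [Nat.mul_succ, Function.iterate_add_apply, hNk, ih]

lemma sh_iter_mod (hNk : ∀ x : N, (sh N)^[k] x = x) (m : ℕ) (x : N) :
    (sh N)^[m] x = (sh N)^[m % k] x := by
  conv_lhs => rw [← Nat.div_add_mod m k]
  rw [Nat.add_comm, Function.iterate_add_apply, sh_iter_mul hNk]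

lemma sh_iter_congr (hNk : ∀ x : N, (sh N)^[k] x = x) {a b : ℕ}
    (h : (a : ZMod k) = (b : ZMod k)) (x : N) : (sh N)^[a] x = (sh N)^[b] x := by
  rw [sh_iter_mod hNk a, sh_iter_mod hNk b]
  have : a % k = b % k := by
    have ha := ZMod.val_natCast (n := k) a
    have hb := ZMod.val_natCast (n := k) b
    rw [← ha, ← hb, h]
  rw [this]

lemma sh_dvd_of_fix (hNk : ∀ x : N, (sh N)^[k] x = x)
    (hNd : ∀ d, 0 < d → d < k → ∀ x : N, (sh N)^[d] x ≠ x)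
    {m : ℕ} {x : N} (h : (sh N)^[m] x = x) : k ∣ m := by
  rw [sh_iter_mod hNk] at h
  rcases Nat.eq_zero_or_pos (m % k) with h0 | h0
  · exact Nat.dvd_of_mod_eq_zero h0
  · exact absurd h (hNd _ h0 (Nat.mod_lt _ (NeZero.pos k)) x)

lemma exists_decomp (hNk : ∀ x : N, (sh N)^[k] x = x)
    (hNd : ∀ d, 0 < d → d < k → ∀ x : N, (sh N)^[d] x ≠ x) :
    ∃ (Q : Type _) (φ : Q × ZMod k ≃ N),
      (∀ q j, φ (q, j + 1) = sh N (φ (q, j))) ∧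
        Cardinal.mk N = Cardinal.mk Q * (k : Cardinal) := by
  classical
  set st : Setoid N := ⟨fun x y => ∃ m : ℕ, (sh N)^[m] x = y, by
    constructor
    · exact fun x => ⟨0, rfl⟩
    · rintro x y ⟨m, rfl⟩
      refine ⟨m * (k - 1), ?_⟩
      rw [← Function.iterate_add_apply]
      have h1 : m * (k - 1) + m = k * m := by
        calc m * (k - 1) + m = m * ((k - 1) + 1) := by rw [Nat.mul_add, Nat.mul_one]
        _ = m * k := by rw [Nat.sub_add_cancel NeZero.one_le]
        _ = k * m := Nat.mul_comm _ _
      rw [h1]; exact sh_iter_mul hNk m x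
    · rintro x y z ⟨m, rfl⟩ ⟨m', rfl⟩
      exact ⟨m' + m, (Function.iterate_add_apply _ _ _ _)⟩⟩ with hst
  set Q := Quotient st with hQ
  have key : ∀ (a b : ℕ) (x : N), a < k → b < k → (sh N)^[a] x = (sh N)^[b] x → a = b := by
    intro a b x ha hb hab
    have h1 : (sh N)^[(k - b) + a] x = x := by
      rw [Function.iterate_add_apply, hab, ← Function.iterate_add_apply]
      have h2 : k - b + b = k := Nat.sub_add_cancel hb.le
      rw [h2]; exact hNk x
    obtain ⟨c, hc⟩ := sh_dvd_of_fix hNk hNd h1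
    have hkpos := NeZero.pos k
    have h3 : k - b + a < 2 * k := by omega
    rcases c with _ | _ | c
    · simp at hc; omega
    · omega
    · exfalso
      have h4 : k * (c + 1 + 1) = k * c + 2 * k := by ring
      omega
  set φ : Q × ZMod k → N := fun p => (sh N)^[p.2.val] p.1.out with hφ
  have hinj : Function.Injective φ := by
    rintro ⟨q, j⟩ ⟨q', j'⟩ h
    simp only [hφ] at h
    have hqq : q = q' := by
      have e1 : st.r q.out ((sh N)^[j.val] q.out) := ⟨j.val, rfl⟩
      have e2 : st.r q'.out ((sh N)^[j'.val] q'.out) := ⟨j'.val, rfl⟩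
      rw [← h] at e2
      have r1 : st.r q.out q'.out := st.trans e1 (st.symm e2)
      have h2 : (⟦q.out⟧ : Q) = ⟦q'.out⟧ := Quotient.sound r1
      rwa [Quotient.out_eq, Quotient.out_eq] at h2
    subst hqq
    have hval := key j.val j'.val q.out (ZMod.val_lt j) (ZMod.val_lt j') h
    have hj : j = j' := (ZMod.natCast_rightInverse (n := k)).injective hval
    rw [hj]
  have hsurj : Function.Surjective φ := by
    intro x
    have h1 : st.r (⟦x⟧ : Q).out x := Quotient.mk_out x
    obtain ⟨m, hm⟩ := h1
    refine ⟨(⟦x⟧, (m : ZMod k)), ?_⟩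
    simp only [hφ]
    rw [ZMod.val_natCast, ← sh_iter_mod hNk]
    exact hm
  set φe : Q × ZMod k ≃ N := Equiv.ofBijective φ ⟨hinj, hsurj⟩ with hφe
  refine ⟨Q, φe, ?_, ?_⟩
  · intro q j
    show (sh N)^[(j + 1).val] q.out = sh N ((sh N)^[j.val] q.out)
    rw [← Function.iterate_succ_apply' (sh N) j.val (Quotient.out q)]
    apply sh_iter_congr hNk
    push_cast
    rw [ZMod.natCast_rightInverse j, ZMod.natCast_rightInverse (j + 1)]
  · rw [Cardinal.mk_congr φe.symm, Cardinal.mk_prod, Cardinal.mk_fintype (ZMod k),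
      ZMod.card k]
    simp


lemma iso_of_models {N₁ : Type w} {N₂ : Type w} [unaryLang.Structure N₁] [unaryLang.Structure N₂]
    (h1k : ∀ x : N₁, (sh N₁)^[k] x = x)
    (h1d : ∀ d, 0 < d → d < k → ∀ x : N₁, (sh N₁)^[d] x ≠ x)
    (h2k : ∀ x : N₂, (sh N₂)^[k] x = x)
    (h2d : ∀ d, 0 < d → d < k → ∀ x : N₂, (sh N₂)^[d] x ≠ x)
    (hcard : Cardinal.mk N₁ = Cardinal.mk N₂) (hinf : Cardinal.aleph0 ≤ Cardinal.mk N₁) :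
    Nonempty (N₁ ≃[unaryLang] N₂) := by
  obtain ⟨Q₁, φ₁, hφ₁, hc₁⟩ := exists_decomp h1k h1d
  obtain ⟨Q₂, φ₂, hφ₂, hc₂⟩ := exists_decomp h2k h2d
  have hkc : (k : Cardinal) ≠ 0 := by
    simp [Nat.cast_eq_zero]; exact NeZero.ne k
  have hQ : ∀ (Q : Type w), Cardinal.mk N₁ = Cardinal.mk Q * (k : Cardinal) →
      Cardinal.mk Q = Cardinal.mk N₁ := by
    intro Q hc
    have hQinf : Cardinal.aleph0 ≤ Cardinal.mk Q := by
      by_contra hlt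
      push_neg at hlt
      have : Cardinal.mk Q * (k : Cardinal) < Cardinal.aleph0 :=
        Cardinal.mul_lt_aleph0 hlt (Cardinal.nat_lt_aleph0 k)
      rw [← hc] at this
      exact absurd hinf (not_le.mpr this)
    rw [hc, Cardinal.mul_eq_left hQinf ((Cardinal.nat_lt_aleph0 k).le.trans hQinf) hkc]
  have hc1' := hQ Q₁ hc₁
  have hc2' := hQ Q₂ (hcard.trans hc₂)
  obtain ⟨θ⟩ := Cardinal.eq.mp (hc1'.trans hc2'.symm)
  set E : N₁ ≃ N₂ := φ₁.symm.trans ((Equiv.prodCongr θ (Equiv.refl (ZMod k))).trans φ₂) with hE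
  have hEsh : ∀ x : N₁, E (sh N₁ x) = sh N₂ (E x) := by
    intro x
    obtain ⟨⟨q, j⟩, rfl⟩ := φ₁.surjective x
    have e1 : sh N₁ (φ₁ (q, j)) = φ₁ (q, j + 1) := (hφ₁ q j).symm
    have e2 : E (φ₁ (q, j)) = φ₂ (θ q, j) := by
      simp [hE, Equiv.prodCongr]
    have e3 : E (φ₁ (q, j + 1)) = φ₂ (θ q, j + 1) := by
      simp [hE, Equiv.prodCongr]
    rw [e1, e2, e3, hφ₂]
  refine ⟨⟨E, ?_, ?_⟩⟩
  · intro n f x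
    match n, f with
    | 1, f =>
      cases f
      have hx : x = fun _ => x 0 := by
        funext i
        have : i = 0 := Subsingleton.elim _ _
        rw [this]
      rw [hx]
      exact hEsh (x 0)
  · intro n r
    exact r.elim

end Decomp
end SFP

namespace SFP
section Cycles
variable {k : ℕ} [NeZero k]

abbrev Mk (k : ℕ) := ℕ × ZMod k

lemma sh_iter_cycle (m : ℕ) (x : Mk k) : (sh (Mk k))^[m] x = (x.1, x.2 + m) := by
  induction m with
  | zero => simp
  | succ m ih =>
      rw [Function.iterate_succ_apply', ih, sh_cycle]
      push_cast
      ring_nf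

lemma mk_per : ∀ x : Mk k, (sh (Mk k))^[k] x = x := by
  intro x
  rw [sh_iter_cycle, ZMod.natCast_self, add_zero]

lemma mk_nper : ∀ d, 0 < d → d < k → ∀ x : Mk k, (sh (Mk k))^[d] x ≠ x := by
  intro d hd hdk x h
  rw [sh_iter_cycle] at h
  have h2 : x.2 + (d : ZMod k) = x.2 := congrArg Prod.snd h
  rw [add_eq_left] at h2
  rw [ZMod.natCast_eq_zero_iff] at h2
  have := Nat.le_of_dvd hd h2
  omega

lemma mem_sh {S : unaryLang.Substructure (Mk k)} {x : Mk k} (h : x ∈ S) :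
    sh (Mk k) x ∈ S :=
  S.fun_mem uf (fun _ => x) (fun _ => h)

lemma mem_sh_iter {S : unaryLang.Substructure (Mk k)} {x : Mk k} (h : x ∈ S) (m : ℕ) :
    (sh (Mk k))^[m] x ∈ S := by
  induction m with
  | zero => exact h
  | succ m ih => rw [Function.iterate_succ_apply']; exact mem_sh ih

lemma fiber_mem {S : unaryLang.Substructure (Mk k)} {x : Mk k} (h : x ∈ S) (j : ZMod k) :
    ((x.1, j) : Mk k) ∈ S := by
  have h1 := mem_sh_iter h (j - x.2).val
  rw [sh_iter_cycle] at h1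
  rw [ZMod.natCast_rightInverse (j - x.2)] at h1
  simpa using h1

/-- The substructure consisting of all cycles indexed by `I`. -/
def fiberSub (k : ℕ) (I : Set ℕ) : unaryLang.Substructure (Mk k) where
  carrier := {x : Mk k | x.1 ∈ I}
  fun_mem := by
    intro n f
    match n, f with
    | 1, f => exact fun x hx => hx 0
    | 0, f => exact f.elim
    | (n+2), f => exact f.elim

@[simp] lemma mem_fiberSub {I : Set ℕ} {x : Mk k} : x ∈ fiberSub k I ↔ x.1 ∈ I := Iff.rfl

lemma sub_eq_fiber (S : unaryLang.Substructure (Mk k)) :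
    (S : Set (Mk k)) = {x : Mk k | x.1 ∈ Prod.fst '' (S : Set (Mk k))} := by
  ext x
  constructor
  · intro h; exact ⟨x, h, rfl⟩
  · rintro ⟨y, hy, hxy⟩
    have := fiber_mem hy x.2
    rwa [hxy, Prod.mk.eta] at this

lemma closure_carrier (s : Set (Mk k)) :
    ((Substructure.closure unaryLang s : unaryLang.Substructure (Mk k)) : Set (Mk k)) =
      {x : Mk k | x.1 ∈ Prod.fst '' s} := by
  apply Set.Subset.antisymm
  · have h1 : Substructure.closure unaryLang s ≤ fiberSub k (Prod.fst '' s) :=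
      Substructure.closure_le.mpr (fun x hx => ⟨x, hx, rfl⟩)
    exact h1
  · rintro x ⟨y, hy, hxy⟩
    have h1 : y ∈ Substructure.closure unaryLang s := Substructure.subset_closure hy
    have h2 := fiber_mem h1 x.2
    rwa [hxy, Prod.mk.eta] at h2

lemma fiber_finite {I : Set ℕ} (hI : I.Finite) : {x : Mk k | x.1 ∈ I}.Finite := by
  have : {x : Mk k | x.1 ∈ I} = I ×ˢ (Set.univ : Set (ZMod k)) := by
    ext x; simp
  rw [this]
  exact hI.prod Set.finite_univ

lemma fg_fst_finite {S : unaryLang.Substructure (Mk k)} (h : S.FG) :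
    (Prod.fst '' (S : Set (Mk k))).Finite := by
  obtain ⟨s, hs⟩ := h
  have h1 : (S : Set (Mk k)) = {x : Mk k | x.1 ∈ Prod.fst '' (s : Set (Mk k))} := by
    rw [← hs, closure_carrier]
  apply Set.Finite.subset (s.finite_toSet.image Prod.fst)
  rintro i ⟨y, hy, rfl⟩
  rw [h1] at hy
  exact hy

lemma fg_finite {S : unaryLang.Substructure (Mk k)} (h : S.FG) :
    (S : Set (Mk k)).Finite := by
  rw [sub_eq_fiber S]
  exact fiber_finite (fg_fst_finite h)


lemma coe_sh (S : unaryLang.Substructure (Mk k)) (x : S) :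
    ((sh S x : S) : Mk k) = sh (Mk k) (x : Mk k) := rfl

lemma coe_sh_iter (S : unaryLang.Substructure (Mk k)) (m : ℕ) (x : S) :
    (((sh S)^[m] x : S) : Mk k) = (sh (Mk k))^[m] (x : Mk k) := by
  induction m with
  | zero => rfl
  | succ m ih =>
      rw [Function.iterate_succ_apply', Function.iterate_succ_apply', coe_sh, ih]

/-- Two elements of a substructure on the same cycle differ by a shift. -/
lemma same_cycle_shift {S : unaryLang.Substructure (Mk k)} {x y : S}
    (h : (x : Mk k).1 = (y : Mk k).1) :
    (sh S)^[((y : Mk k).2 - (x : Mk k).2).val] x = y := by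
  apply Subtype.ext
  rw [coe_sh_iter, sh_iter_cycle, ZMod.natCast_rightInverse ((y : Mk k).2 - (x : Mk k).2)]
  ext
  · exact h
  · simp

/-- How an embedding of a substructure into `Mk k` acts on a cycle. -/
lemma emb_shiftEq {S : unaryLang.Substructure (Mk k)} (e : S ↪[unaryLang] Mk k) {x y : S}
    (h : (x : Mk k).1 = (y : Mk k).1) :
    e y = ((e x).1, (e x).2 + ((y : Mk k).2 - (x : Mk k).2)) := by
  have h1 := same_cycle_shift (S := S) h
  conv_lhs => rw [← h1]
  rw [emb_sh_iter, sh_iter_cycle, ZMod.natCast_rightInverse ((y : Mk k).2 - (x : Mk k).2)]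

/-- The automorphism of `Mk k` determined by a permutation of the cycles and
rotation amounts. -/
def equivOf (k : ℕ) (τ : ℕ ≃ ℕ) (r : ℕ → ZMod k) : (Mk k) ≃[unaryLang] (Mk k) where
  toFun := fun x => (τ x.1, x.2 + r x.1)
  invFun := fun x => (τ.symm x.1, x.2 - r (τ.symm x.1))
  left_inv := by intro x; simp
  right_inv := by intro x; simp
  map_fun' := by
    intro n f x
    match n, f with
    | 1, f =>
        show ((τ (x 0).1, (x 0).2 + 1 + r (x 0).1) : Mk k)
          = (τ (x 0).1, (x 0).2 + r (x 0).1 + 1)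
        rw [add_right_comm]
    | 0, f => exact f.elim
    | (n+2), f => exact f.elim
  map_rel' := by intro n r; exact r.elim

@[simp] lemma equivOf_apply (τ : ℕ ≃ ℕ) (r : ℕ → ZMod k) (x : Mk k) :
    equivOf k τ r x = (τ x.1, x.2 + r x.1) := rfl

/-- Extend an injection defined on a finite set of naturals to a permutation. -/
lemma exists_perm_extend {I : Set ℕ} (hI : I.Finite) {p : ℕ → ℕ} (hp : Set.InjOn p I) :
    ∃ τ : ℕ ≃ ℕ, ∀ i ∈ I, τ i = p i := by
  classical
  have hIc : (Iᶜ : Set ℕ).Infinite := hI.infinite_compl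
  have hJc : ((p '' I)ᶜ : Set ℕ).Infinite := (hI.image p).infinite_compl
  let e1 : I ≃ (p '' I : Set ℕ) := Equiv.Set.imageOfInjOn p I hp
  have e2 : (Iᶜ : Set ℕ) ≃ ((p '' I)ᶜ : Set ℕ) := by
    haveI := Set.infinite_coe_iff.mpr hIc
    haveI := Set.infinite_coe_iff.mpr hJc
    have h1 : Cardinal.mk (Iᶜ : Set ℕ) = Cardinal.mk ((p '' I)ᶜ : Set ℕ) := by
      rw [Cardinal.mk_eq_aleph0, Cardinal.mk_eq_aleph0]
    exact (Cardinal.eq.mp h1).some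
  refine ⟨(Equiv.Set.sumCompl I).symm.trans ((e1.sumCongr e2).trans
    (Equiv.Set.sumCompl (p '' I))), ?_⟩
  intro i hi
  simp only [Equiv.trans_apply, Equiv.Set.sumCompl_symm_apply_of_mem hi,
    Equiv.sumCongr_apply, Sum.map_inl, Equiv.Set.sumCompl_apply_inl]
  rfl


lemma uh (k : ℕ) [NeZero k] : unaryLang.IsUltrahomogeneous (Mk k) := by
  classical
  intro S hFG e
  set I : Set ℕ := Prod.fst '' (S : Set (Mk k)) with hI
  have hIfin : I.Finite := fg_fst_finite hFG
  have hmem : ∀ i ∈ I, ∀ j : ZMod k, ((i, j) : Mk k) ∈ S := by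
    rintro i ⟨y, hy, rfl⟩ j; exact fiber_mem hy j
  set p : ℕ → ℕ := fun i => if h : i ∈ I then (e ⟨(i, 0), hmem i h 0⟩).1 else i with hp
  set r : ℕ → ZMod k := fun i => if h : i ∈ I then (e ⟨(i, 0), hmem i h 0⟩).2 else 0 with hr
  have hInj : Set.InjOn p I := by
    intro i hi i' hi' hpp
    rw [hp] at hpp
    simp only [dif_pos hi, dif_pos hi'] at hpp
    set xi : S := ⟨(i, 0), hmem i hi 0⟩ with hxi
    set xi' : S := ⟨(i', 0), hmem i' hi' 0⟩ with hxi'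
    set z : S := ⟨(i, (e xi').2 - (e xi).2), hmem i hi _⟩ with hz
    have h1 : e z = ((e xi).1, (e xi).2 + (((z : Mk k).2) - ((xi : Mk k).2))) :=
      emb_shiftEq e rfl
    have h2 : e z = e xi' := by
      rw [h1, hpp]
      have : ((z : Mk k).2) - ((xi : Mk k).2) = (e xi').2 - (e xi).2 := by
        simp [hz, hxi]
      rw [this]
      refine Prod.ext rfl ?_
      simp
    have h3 := e.injective h2
    have h4 : (z : Mk k).1 = (xi' : Mk k).1 := by rw [h3]
    simpa [hz, hxi'] using h4
  obtain ⟨τ, hτ⟩ := exists_perm_extend hIfin hInj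
  refine ⟨equivOf k τ r, Embedding.ext fun x => ?_⟩
  obtain ⟨⟨i, j⟩, hx⟩ := x
  have hiI : i ∈ I := ⟨(i, j), hx, rfl⟩
  have hRHS : (equivOf k τ r).toEmbedding.comp S.subtype ⟨(i, j), hx⟩
      = ((τ i, j + r i) : Mk k) := rfl
  rw [hRHS, hτ i hiI, hp, hr]
  simp only [dif_pos hiI]
  set xi : S := ⟨(i, 0), hmem i hiI 0⟩ with hxi
  have h1 : e ⟨(i, j), hx⟩ = ((e xi).1, (e xi).2 + ((j : ZMod k) - ((xi : Mk k).2))) :=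
    emb_shiftEq e rfl
  rw [h1]
  refine Prod.ext rfl ?_
  show (e xi).2 + (j - 0) = j + (e xi).2
  rw [sub_zero, add_comm]


lemma two_emb_shift {A : unaryLang.Substructure (Mk k)} (eB eC : A ↪[unaryLang] Mk k)
    {a a' : A} (h : (eC a).1 = (eC a').1) :
    eB a' = ((eB a).1, (eB a).2 + ((eC a').2 - (eC a).2)) := by
  set m := ((eC a').2 - (eC a).2).val with hm
  have h1 : (sh (Mk k))^[m] (eC a) = eC a' := by
    rw [sh_iter_cycle, hm, ZMod.natCast_rightInverse]
    exact Prod.ext h (by simp)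
  have h2 : eC ((sh A)^[m] a) = eC a' := by rw [emb_sh_iter]; exact h1
  have h3 : (sh A)^[m] a = a' := eC.injective h2
  have h4 : eB a' = (sh (Mk k))^[m] (eB a) := by rw [← h3, emb_sh_iter]
  rw [h4, sh_iter_cycle, hm, ZMod.natCast_rightInverse]

lemma range_emb_eq {A : unaryLang.Substructure (Mk k)} (e : A ↪[unaryLang] Mk k) :
    Set.range ⇑e = {x : Mk k | x.1 ∈ Set.range (fun a : A => (e a).1)} := by
  ext x
  constructor
  · rintro ⟨a, rfl⟩; exact ⟨a, rfl⟩
  · rintro ⟨a, ha⟩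
    refine ⟨(sh A)^[(x.2 - (e a).2).val] a, ?_⟩
    rw [emb_sh_iter, sh_iter_cycle, ZMod.natCast_rightInverse]
    exact Prod.ext ha (by simp)

lemma equivOf_image_fiber (τ : ℕ ≃ ℕ) (r : ℕ → ZMod k) (I : Set ℕ) :
    ⇑(equivOf k τ r) '' {x : Mk k | x.1 ∈ I} = {x : Mk k | x.1 ∈ τ '' I} := by
  ext x
  constructor
  · rintro ⟨y, hy, rfl⟩; exact ⟨y.1, hy, rfl⟩
  · rintro ⟨i, hi, hix⟩
    refine ⟨(i, x.2 - r i), hi, ?_⟩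
    rw [equivOf_apply]
    exact Prod.ext hix (by simp)


lemma sap (k : ℕ) [NeZero k] : HasSAP unaryLang (Mk k) := by
  classical
  intro A B C hA hB hC i₀ j₀
  set eB : A ↪[unaryLang] Mk k := B.subtype.comp i₀ with heB
  set eC : A ↪[unaryLang] Mk k := C.subtype.comp j₀ with heC
  have heBmem : ∀ a : A, eB a ∈ B := fun a => (i₀ a).2
  have heCmem : ∀ a : A, eC a ∈ C := fun a => (j₀ a).2
  set IB : Set ℕ := Prod.fst '' (B : Set (Mk k)) with hIB
  set IC : Set ℕ := Prod.fst '' (C : Set (Mk k)) with hIC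
  have hIBfin : IB.Finite := fg_fst_finite hB
  have hICfin : IC.Finite := fg_fst_finite hC
  set J : Set ℕ := Set.range (fun a : A => (eC a).1) with hJ
  have hJIC : J ⊆ IC := by rintro i ⟨a, rfl⟩; exact ⟨eC a, heCmem a, rfl⟩
  have hfresh : (IBᶜ : Set ℕ).Infinite := hIBfin.infinite_compl
  set femb : ℕ ↪ (IBᶜ : Set ℕ) := Set.Infinite.natEmbedding _ hfresh with hfemb
  set p : ℕ → ℕ := fun i => if h : i ∈ J then (eB h.choose).1 else (femb i : ℕ) with hp
  set r : ℕ → ZMod k := fun i =>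
    if h : i ∈ J then (eB h.choose).2 - (eC h.choose).2 else 0 with hr
  have hpJ : ∀ {i} (h : i ∈ J), p i = (eB h.choose).1 := by
    intro i h; rw [hp]; simp only [dif_pos h]
  have hpJ' : ∀ {i} (h : i ∈ J) (a : A), (eC a).1 = i → p i = (eB a).1 := by
    intro i h a ha
    rw [hpJ h]
    have hspec : (eC h.choose).1 = i := h.choose_spec
    have := two_emb_shift eB eC (a := h.choose) (a' := a) (by rw [hspec, ha])
    rw [this]
  have hpJIB : ∀ {i}, i ∈ J → p i ∈ IB := by
    intro i h
    rw [hpJ h]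
    exact ⟨eB h.choose, heBmem _, rfl⟩
  have hpnJ : ∀ {i}, i ∉ J → p i ∉ IB := by
    intro i h
    rw [hp]; simp only [dif_neg h]
    exact (femb i).2
  have hInj : Set.InjOn p IC := by
    intro i hi i' hi' hpp
    by_cases h1 : i ∈ J
    · by_cases h2 : i' ∈ J
      · rw [hpJ h1, hpJ h2] at hpp
        have h3 := two_emb_shift eC eB (a := h1.choose) (a' := h2.choose) hpp
        have h4 : (eC h2.choose).1 = (eC h1.choose).1 := by rw [h3]
        have hs1 : (eC h1.choose).1 = i := h1.choose_spec
        have hs2 : (eC h2.choose).1 = i' := h2.choose_spec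
        rw [hs1, hs2] at h4
        exact h4.symm
      · exact absurd (hpp ▸ hpJIB h1) (hpnJ h2)
    · by_cases h2 : i' ∈ J
      · exact absurd (hpp ▸ hpnJ h1) (by simpa using hpJIB h2)
      · rw [hp] at hpp
        simp only [dif_neg h1, dif_neg h2] at hpp
        exact femb.injective (Subtype.ext hpp)
  obtain ⟨τ, hτ⟩ := exists_perm_extend hICfin hInj
  refine ⟨B.subtype, (equivOf k τ r).toEmbedding.comp C.subtype, ?_, ?_⟩
  · refine Embedding.ext fun a => ?_
    show eB a = equivOf k τ r (eC a)
    rw [equivOf_apply]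
    have hiJ : (eC a).1 ∈ J := ⟨a, rfl⟩
    have hiIC : (eC a).1 ∈ IC := hJIC hiJ
    rw [hτ _ hiIC, hpJ' hiJ a rfl, hr]
    simp only [dif_pos hiJ]
    have hspec : (eC hiJ.choose).1 = (eC a).1 := hiJ.choose_spec
    have h5 := two_emb_shift eB eC (a := hiJ.choose) (a' := a) hspec
    have h6 := two_emb_shift eB eC (a := hiJ.choose) (a' := hiJ.choose) rfl
    rw [h5]
    refine Prod.ext rfl ?_
    show (eB hiJ.choose).2 + ((eC a).2 - (eC hiJ.choose).2)
        = (eC a).2 + ((eB hiJ.choose).2 - (eC hiJ.choose).2)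
    ring
  · have hrB : Set.range ⇑B.subtype = (B : Set (Mk k)) := by
      rw [Substructure.coe_subtype, Subtype.range_coe]
    have hrj : Set.range ⇑((equivOf k τ r).toEmbedding.comp C.subtype)
        = ⇑(equivOf k τ r) '' (C : Set (Mk k)) := by
      have hco : ⇑((equivOf k τ r).toEmbedding.comp C.subtype)
          = ⇑(equivOf k τ r) ∘ ((↑) : C → Mk k) := rfl
      rw [hco, Set.range_comp, Subtype.range_coe]
    have hCfib : (C : Set (Mk k)) = {x : Mk k | x.1 ∈ IC} := sub_eq_fiber C
    have hBfib : (B : Set (Mk k)) = {x : Mk k | x.1 ∈ IB} := sub_eq_fiber B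
    have hreB : Set.range ⇑(B.subtype.comp i₀)
        = {x : Mk k | x.1 ∈ Set.range (fun a : A => (eB a).1)} := range_emb_eq eB
    have hKpJ : Set.range (fun a : A => (eB a).1) = p '' J := by
      ext i
      constructor
      · rintro ⟨a, rfl⟩
        refine ⟨(eC a).1, ⟨a, rfl⟩, ?_⟩
        show p (eC a).1 = (eB a).1
        exact hpJ' (show (eC a).1 ∈ J from ⟨a, rfl⟩) a rfl
      · rintro ⟨i', hi', rfl⟩
        rw [hpJ hi']
        exact ⟨hi'.choose, rfl⟩
    rw [hrB, hrj, hreB, hCfib, hBfib, hKpJ, equivOf_image_fiber]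
    have hτIC : τ '' IC = p '' IC := by
      apply Set.image_congr
      intro i hi; exact hτ i hi
    rw [hτIC]
    ext x
    simp only [Set.mem_inter_iff, Set.mem_setOf_eq]
    constructor
    · rintro ⟨hxB, i, hiIC, hpi⟩
      by_cases hiJ : i ∈ J
      · exact ⟨i, hiJ, hpi⟩
      · exact absurd (hpi ▸ hpnJ hiJ) (by simp [hxB])
    · rintro ⟨i, hiJ, hpi⟩
      exact ⟨hpi ▸ hpJIB hiJ, i, hJIC hiJ, hpi⟩


lemma totcat (k : ℕ) [NeZero k] : TotallyCategorical.{w} unaryLang (Mk k) := by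
  intro κ hκ M₁ M₂ h1 h2
  have hTk : perSent k ∈ unaryLang.completeTheory (Mk k) :=
    mem_completeTheory.mpr ((realize_perSent k).mpr mk_per)
  have hTd : ∀ d, 0 < d → d < k → nperSent d ∈ unaryLang.completeTheory (Mk k) := by
    intro d hd hdk
    exact mem_completeTheory.mpr ((realize_nperSent d).mpr (mk_nper d hd hdk))
  have h1k : ∀ x : M₁, (sh M₁)^[k] x = x :=
    (realize_perSent k).mp (Theory.realize_sentence_of_mem _ hTk)
  have h2k : ∀ x : M₂, (sh M₂)^[k] x = x :=
    (realize_perSent k).mp (Theory.realize_sentence_of_mem _ hTk)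
  have h1d : ∀ d, 0 < d → d < k → ∀ x : M₁, (sh M₁)^[d] x ≠ x := fun d hd hdk =>
    (realize_nperSent d).mp (Theory.realize_sentence_of_mem _ (hTd d hd hdk))
  have h2d : ∀ d, 0 < d → d < k → ∀ x : M₂, (sh M₂)^[d] x ≠ x := fun d hd hdk =>
    (realize_nperSent d).mp (Theory.realize_sentence_of_mem _ (hTd d hd hdk))
  exact iso_of_models h1k h1d h2k h2d (h1.trans h2.symm) (h1 ▸ hκ)

lemma fiber_card (i : ℕ) : ({y : Mk k | y.1 = i} : Set (Mk k)).ncard = k := by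
  have e : ({y : Mk k | y.1 = i} : Set (Mk k)) ≃ ZMod k :=
    { toFun := fun y => y.1.2
      invFun := fun j => ⟨(i, j), rfl⟩
      left_inv := fun y => Subtype.ext (Prod.ext y.2.symm rfl)
      right_inv := fun j => rfl }
  rw [← Nat.card_coe_set_eq, Nat.card_congr e, Nat.card_eq_fintype_card, ZMod.card]

lemma eq_fiber {A : unaryLang.Substructure (Mk k)} (hA : A.FG) (hcard : Nat.card A ≤ k)
    {x : Mk k} (hx : x ∈ A) : (A : Set (Mk k)) = {y : Mk k | y.1 = x.1} := by
  have hsub : {y : Mk k | y.1 = x.1} ⊆ (A : Set (Mk k)) := by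
    intro y hy
    have h1 := fiber_mem hx y.2
    have h2 : y = (x.1, y.2) := Prod.ext hy rfl
    rw [h2]; exact h1
  have hfin : (A : Set (Mk k)).Finite := fg_finite hA
  have hcard' : (A : Set (Mk k)).ncard ≤ k := by
    rw [← Nat.card_coe_set_eq]
    exact hcard
  have hmain := Set.eq_of_subset_of_ncard_le hsub (by rw [fiber_card]; exact hcard') hfin
  exact hmain.symm

end Cycles
end SFP

/-- For every `k ≥ 1` there is a countably infinite, locally finite structure
`M_k` in the language of a single unary function which is ultrahomogeneous, has
the strong amalgamation property, is totally categorical, and in which every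
family of at least `n` finitely generated substructures of cardinality at most
`k` contains a sunflower of size `n` (i.e. `SF[M_k](n, k) = n`). -/
theorem exists_structure_SF_eq (k : ℕ) (hk : 1 ≤ k) :
    ∃ (M : Type) (strM : unaryLang.Structure M),
      letI := strM
      Countable M ∧ Infinite M ∧ LocallyFiniteStr unaryLang M ∧
      unaryLang.IsUltrahomogeneous M ∧ HasSAP unaryLang M ∧
      TotallyCategorical unaryLang M ∧
      ∀ (n : ℕ) (X : Finset (unaryLang.Substructure M)),
        (∀ A ∈ X, A.FG ∧ Nat.card A ≤ k) → n ≤ X.card →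
        ∃ S ⊆ X, S.card = n ∧
          SunflowerSub unaryLang M (S : Set (unaryLang.Substructure M)) := by
  haveI : NeZero k := ⟨by omega⟩
  refine ⟨ℕ × ZMod k, cycleStr k, ?_, ?_, ?_, SFP.uh k, SFP.sap k, SFP.totcat k, ?_⟩
  · infer_instance
  · infer_instance
  · intro s hs
    exact ⟨SFP.fiberSub k (Prod.fst '' s), fun x hx => ⟨x, hx, rfl⟩,
      SFP.fiber_finite (hs.image _)⟩
  · intro n X hX hn
    obtain ⟨S, hSX, hScard⟩ := Finset.exists_subset_card_eq hn
    refine ⟨S, hSX, hScard, ?_⟩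
    have hdisj : ∀ A₀ ∈ X, ∀ A₁ ∈ X, A₀ ≠ A₁ →
        (A₀ : Set (ℕ × ZMod k)) ∩ (A₁ : Set (ℕ × ZMod k)) = ∅ := by
      intro A₀ h₀ A₁ h₁ hne
      rw [Set.eq_empty_iff_forall_notMem]
      rintro x ⟨hx0, hx1⟩
      have e0 := SFP.eq_fiber (hX A₀ h₀).1 (hX A₀ h₀).2 hx0
      have e1 := SFP.eq_fiber (hX A₁ h₁).1 (hX A₁ h₁).2 hx1
      exact hne (SetLike.ext' (e0.trans e1.symm))
    intro A₀ hA₀ A₁ hA₁ B₀ hB₀ B₁ hB₁ hne hne'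
    rw [hdisj A₀ (hSX hA₀) A₁ (hSX hA₁) hne, hdisj B₀ (hSX hB₀) B₁ (hSX hB₁) hne']
end

section
/- Let k ≥ 1, let L be the first-order language consisting of a single unary function symbol f, and let M_k be the L-structure with underlying set ℕ × ZMod k in which f is interpreted as the map (i,j) ↦ (i, j+1). Then M_k has the strong amalgamation property: whenever i₀ : A → B and j₀ : A → C are embeddings of finitely generated substructures of M_k, there are embeddings i₁ : B → M_k and j₁ : C → M_k such that i₁ ∘ i₀ = j₁ ∘ j₀ and range(i₁) ∩ range(j₁) = range(i₁ ∘ i₀). -/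
open FirstOrder FirstOrder.Language

universe w

namespace CycleAux

variable {k : ℕ}

/-- the step map on the ambient structure -/
def step (x : ℕ × ZMod k) : ℕ × ZMod k := (x.1, x.2 + 1)

lemma funMap_eq (x : Fin 1 → ℕ × ZMod k) :
    Structure.funMap (L := unaryLang) (n := 1) (PUnit.unit : unaryLang.Functions 1) x = step (x 0) := rfl

/-- the step map on a substructure -/
def sstep (S : unaryLang.Substructure (ℕ × ZMod k)) (x : S) : S :=
  Structure.funMap (L := unaryLang) (n := 1) (M := S) (PUnit.unit : unaryLang.Functions 1) ![x]

lemma coe_sstep (S : unaryLang.Substructure (ℕ × ZMod k)) (x : S) :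
    ((sstep S x : S) : ℕ × ZMod k) = step (x : ℕ × ZMod k) := rfl

lemma coe_sstep_iter (S : unaryLang.Substructure (ℕ × ZMod k)) (x : S) (m : ℕ) :
    (((sstep S)^[m] x : S) : ℕ × ZMod k) = ((x : ℕ × ZMod k).1, (x : ℕ × ZMod k).2 + m) := by
  induction m with
  | zero => simp
  | succ m ih =>
      rw [Function.iterate_succ_apply', coe_sstep, ih, step]
      refine Prod.ext rfl ?_
      push_cast
      ring

lemma emb_step {S : unaryLang.Substructure (ℕ × ZMod k)}
    (φ : S ↪[unaryLang] (ℕ × ZMod k)) (x : S) : φ (sstep S x) = step (φ x) := by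
  have h := Embedding.map_fun φ (n := 1) (PUnit.unit : unaryLang.Functions 1) ![x]
  rw [sstep, h, funMap_eq]
  rfl

lemma emb_iter {S : unaryLang.Substructure (ℕ × ZMod k)}
    (φ : S ↪[unaryLang] (ℕ × ZMod k)) (x : S) (m : ℕ) :
    φ ((sstep S)^[m] x) = ((φ x).1, (φ x).2 + m) := by
  induction m with
  | zero => simp
  | succ m ih =>
      rw [Function.iterate_succ_apply', emb_step, ih, step]
      refine Prod.ext rfl ?_
      push_cast
      ring

variable [NeZero k]

lemma map_cycle {S : unaryLang.Substructure (ℕ × ZMod k)}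
    (φ : S ↪[unaryLang] (ℕ × ZMod k)) {x y : S}
    (h : (x : ℕ × ZMod k).1 = (y : ℕ × ZMod k).1) :
    φ y = ((φ x).1, (φ x).2 + ((y : ℕ × ZMod k).2 - (x : ℕ × ZMod k).2)) := by
  have hy : (sstep S)^[((y : ℕ × ZMod k).2 - (x : ℕ × ZMod k).2).val] x = y := by
    apply Subtype.ext
    rw [coe_sstep_iter]
    refine Prod.ext h ?_
    rw [ZMod.natCast_val, ZMod.cast_id]
    ring
  have h2 := emb_iter φ x ((y : ℕ × ZMod k).2 - (x : ℕ × ZMod k).2).val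
  rw [hy] at h2
  rw [h2, ZMod.natCast_val, ZMod.cast_id]

lemma reflect_cycle {S : unaryLang.Substructure (ℕ × ZMod k)}
    (φ : S ↪[unaryLang] (ℕ × ZMod k)) {x y : S}
    (h : (φ x).1 = (φ y).1) :
    (y : ℕ × ZMod k) = ((x : ℕ × ZMod k).1, (x : ℕ × ZMod k).2 + ((φ y).2 - (φ x).2)) := by
  have hy : φ ((sstep S)^[((φ y).2 - (φ x).2).val] x) = φ y := by
    rw [emb_iter]
    refine Prod.ext h ?_
    rw [ZMod.natCast_val, ZMod.cast_id]
    ring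
  have heq := φ.injective hy
  have h2 := coe_sstep_iter S x ((φ y).2 - (φ x).2).val
  rw [heq] at h2
  rw [h2, ZMod.natCast_val, ZMod.cast_id]

lemma mem_cycle {S : unaryLang.Substructure (ℕ × ZMod k)} {x : ℕ × ZMod k}
    (hx : x ∈ S) (z : ZMod k) : (x.1, z) ∈ S := by
  have h := ((sstep S)^[(z - x.2).val] (⟨x, hx⟩ : S)).2
  rw [coe_sstep_iter] at h
  simpa [ZMod.natCast_val, ZMod.cast_id] using h

omit [NeZero k] in
lemma bound_of_fg {S : unaryLang.Substructure (ℕ × ZMod k)} (h : S.FG) :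
    ∃ N : ℕ, ∀ x ∈ S, x.1 ≤ N := by
  obtain ⟨s, hs⟩ := h
  refine ⟨s.sup Prod.fst, ?_⟩
  set D : unaryLang.Substructure (ℕ × ZMod k) :=
    { carrier := {x | x.1 ≤ s.sup Prod.fst}
      fun_mem := by
        intro n f x hx
        cases n with
        | zero => exact (f : Empty).elim
        | succ m =>
          cases m with
          | zero => exact hx 0
          | succ l => exact (f : Empty).elim }
  have hle : S ≤ D := by
    rw [← hs]
    apply (Substructure.closure_le).mpr
    intro y hy
    exact Finset.le_sup (f := Prod.fst) hy
  exact fun x hx => hle hx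

end CycleAux

open CycleAux


/-- The disjoint union of `ω`-many `f`-cycles of length `k ≥ 1` has the strong
amalgamation property. -/
theorem cycleStructure_hasSAP (k : ℕ) (hk : 1 ≤ k) :
    HasSAP unaryLang (ℕ × ZMod k) := by
  haveI : NeZero k := ⟨by omega⟩
  intro A B C hA hB hC i₀ j₀
  classical
  obtain ⟨N, hN⟩ := bound_of_fg hB
  set φ : A ↪[unaryLang] (ℕ × ZMod k) := B.subtype.comp i₀ with hφdef
  set ψ : A ↪[unaryLang] (ℕ × ZMod k) := C.subtype.comp j₀ with hψdef
  have hφle : ∀ a : A, (φ a).1 ≤ N := fun a => hN _ (i₀ a).2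
  set G : ℕ → ZMod k → ℕ × ZMod k := fun i z =>
    if h : ∃ a : A, (ψ a).1 = i then
      ((φ h.choose).1, (φ h.choose).2 + z - (ψ h.choose).2)
    else (i + N + 1, z) with hGdef
  -- independence of the choice of witness
  have indep : ∀ (a : A) (z : ZMod k),
      G (ψ a).1 z = ((φ a).1, (φ a).2 + z - (ψ a).2) := by
    intro a z
    have h : ∃ a' : A, (ψ a').1 = (ψ a).1 := ⟨a, rfl⟩
    rw [hGdef]
    simp only [dif_pos h]
    set a' := h.choose with ha'def
    have ha' : (ψ a').1 = (ψ a).1 := h.choose_spec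
    have h1 : (a : ℕ × ZMod k) =
        ((a' : ℕ × ZMod k).1, (a' : ℕ × ZMod k).2 + ((ψ a).2 - (ψ a').2)) :=
      reflect_cycle ψ ha'
    have hfst : (a' : ℕ × ZMod k).1 = (a : ℕ × ZMod k).1 := by rw [h1]
    have h2 := map_cycle φ hfst
    have h3 := map_cycle ψ hfst
    rw [h2, h3]
    refine Prod.ext rfl ?_
    have hsnd : (a : ℕ × ZMod k).2 = (a' : ℕ × ZMod k).2 + ((ψ a).2 - (ψ a').2) := by
      rw [h1]
    rw [hsnd]
    ring
  -- key step compatibility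
  have hGstep : ∀ (i : ℕ) (z : ZMod k), G i (z + 1) = step (G i z) := by
    intro i z
    rw [hGdef]
    by_cases h : ∃ a : A, (ψ a).1 = i
    · simp only [dif_pos h, step]
      refine Prod.ext rfl ?_
      ring
    · simp only [dif_neg h, step]
  -- the map underlying j₁
  set F : C → ℕ × ZMod k := fun c => G (c : ℕ × ZMod k).1 (c : ℕ × ZMod k).2 with hFdef
  have hFinj : Function.Injective F := by
    intro c c' h
    rw [hFdef] at h
    simp only at h
    by_cases h1 : ∃ a : A, (ψ a).1 = (c : ℕ × ZMod k).1
    · by_cases h2 : ∃ a : A, (ψ a).1 = (c' : ℕ × ZMod k).1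
      · obtain ⟨a, ha⟩ := h1
        obtain ⟨a', ha'⟩ := h2
        rw [← ha, ← ha', indep, indep, Prod.mk.injEq] at h
        have hf : (φ a).1 = (φ a').1 := h.1
        have hr : (a' : ℕ × ZMod k) =
            ((a : ℕ × ZMod k).1, (a : ℕ × ZMod k).2 + ((φ a').2 - (φ a).2)) :=
          reflect_cycle φ hf
        have hfst : (a : ℕ × ZMod k).1 = (a' : ℕ × ZMod k).1 := by rw [hr]
        have h3 := map_cycle ψ hfst
        have e1 : (φ a).2 + (c : ℕ × ZMod k).2 - (ψ a).2
            = (φ a').2 + (c' : ℕ × ZMod k).2 - (ψ a').2 := h.2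
        have e2 : (ψ a').2 = (ψ a).2 + ((φ a').2 - (φ a).2) := by
          rw [h3]
          have : (a' : ℕ × ZMod k).2 = (a : ℕ × ZMod k).2 + ((φ a').2 - (φ a).2) := by rw [hr]
          rw [this]
          ring
        apply Subtype.ext
        refine Prod.ext ?_ ?_
        · rw [← ha, ← ha']
          rw [h3]
        · linear_combination e1 - e2
      · exfalso
        rw [← (show (ψ h1.choose).1 = _ from h1.choose_spec), indep, hGdef] at h
        simp only at h
        rw [dif_neg h2, Prod.mk.injEq] at h
        have h5 := h.1
        have := hφle h1.choose
        omega
    · by_cases h2 : ∃ a : A, (ψ a).1 = (c' : ℕ × ZMod k).1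
      · exfalso
        rw [← (show (ψ h2.choose).1 = _ from h2.choose_spec), indep, hGdef] at h
        simp only at h
        rw [dif_neg h1, Prod.mk.injEq] at h
        have h5 := h.1
        have := hφle h2.choose
        omega
      · rw [hGdef] at h
        simp only at h
        rw [dif_neg h1, dif_neg h2, Prod.mk.injEq] at h
        apply Subtype.ext
        exact Prod.ext (by omega) h.2
  set j₁ : C ↪[unaryLang] (ℕ × ZMod k) :=
    { toFun := F
      inj' := hFinj
      map_fun' := by
        intro n f x
        match n, f with
        | 1, _ =>
          show F (sstep C (x 0)) = step (F (x 0))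
          rw [hFdef]
          simp only
          rw [coe_sstep]
          exact hGstep _ _
      map_rel' := by
        intro n r x
        exact Empty.elim r } with hj₁def
  have hj₁ : ∀ c : C, j₁ c = F c := fun c => rfl
  refine ⟨B.subtype, j₁, ?_, ?_⟩
  · apply FirstOrder.Language.Embedding.ext
    intro a
    rw [Embedding.comp_apply, Embedding.comp_apply, hj₁]
    show (φ a : ℕ × ZMod k) = F (j₀ a)
    have hc : ((j₀ a : C) : ℕ × ZMod k) = ψ a := rfl
    rw [hFdef]
    simp only
    rw [hc, indep]
    refine Prod.ext rfl ?_
    ring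
  · ext x
    simp only [Set.mem_inter_iff, Set.mem_range]
    constructor
    · rintro ⟨⟨b, rfl⟩, ⟨c, hc⟩⟩
      have hxB : (b : ℕ × ZMod k) ∈ B := b.2
      by_cases h : ∃ a : A, (ψ a).1 = (c : ℕ × ZMod k).1
      · obtain ⟨a, ha⟩ := h
        have hFc : F c = ((φ a).1, (φ a).2 + (c : ℕ × ZMod k).2 - (ψ a).2) := by
          rw [hFdef]
          simp only
          rw [← ha, indep]
        set a' : A := ⟨((a : ℕ × ZMod k).1,
            (a : ℕ × ZMod k).2 + ((c : ℕ × ZMod k).2 - (ψ a).2)), mem_cycle a.2 _⟩ with ha'def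
        refine ⟨a', ?_⟩
        have hfst : (a : ℕ × ZMod k).1 = (a' : ℕ × ZMod k).1 := rfl
        have h2 := map_cycle φ hfst
        have hc' : F c = (b : ℕ × ZMod k) := hc
        rw [Embedding.comp_apply]
        show (φ a' : ℕ × ZMod k) = (b : ℕ × ZMod k)
        rw [h2, ← hc', hFc]
        refine Prod.ext rfl ?_
        show (φ a).2 + ((a' : ℕ × ZMod k).2 - (a : ℕ × ZMod k).2)
            = (φ a).2 + (c : ℕ × ZMod k).2 - (ψ a).2
        have : (a' : ℕ × ZMod k).2
            = (a : ℕ × ZMod k).2 + ((c : ℕ × ZMod k).2 - (ψ a).2) := rfl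
        rw [this]
        ring
      · exfalso
        have hFc : F c = ((c : ℕ × ZMod k).1 + N + 1, (c : ℕ × ZMod k).2) := by
          simp only [hFdef, hGdef]; rw [dif_neg h]
        have hc' : F c = (b : ℕ × ZMod k) := hc
        have h1 : (b : ℕ × ZMod k).1 ≤ N := hN _ hxB
        rw [← hc', hFc] at h1
        simp only at h1
        omega
    · rintro ⟨a, rfl⟩
      rw [Embedding.comp_apply]
      refine ⟨⟨i₀ a, rfl⟩, ⟨j₀ a, ?_⟩⟩
      rw [hj₁]
      show F (j₀ a) = (φ a : ℕ × ZMod k)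
      have hc : ((j₀ a : C) : ℕ × ZMod k) = ψ a := rfl
      rw [hFdef]
      simp only
      rw [hc, indep]
      refine Prod.ext rfl ?_
      ring
end

section
/- Let k ≥ 1, let L be the first-order language consisting of a single unary function symbol f, and let M_k be the L-structure with underlying set ℕ × ZMod k in which f is interpreted as the map (i,j) ↦ (i, j+1). Then the complete first-order theory of M_k is κ-categorical for every infinite cardinal κ (i.e., M_k is totally categorical). -/
open FirstOrder FirstOrder.Language

universe w u

/-- The unary function symbol. -/
def uf : unaryLang.Functions 1 := PUnit.unit

/-- The interpretation of the unary function symbol. -/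
def uF {M : Type*} [unaryLang.Structure M] (x : M) : M :=
  Structure.funMap uf ![x]

theorem uF_cycle (k : ℕ) (x : ℕ × ZMod k) : uF x = (x.1, x.2 + 1) := rfl

/-- Iterated application of `f` to a term. -/
def iterTerm {α : Type*} (n : ℕ) (t : unaryLang.Term α) : unaryLang.Term α :=
  match n with
  | 0 => t
  | n + 1 => uf.apply₁ (iterTerm n t)

theorem realize_iterTerm {M : Type*} [unaryLang.Structure M] {α : Type*}
    (n : ℕ) (t : unaryLang.Term α) (v : α → M) :
    (iterTerm n t).realize v = uF^[n] (t.realize v) := by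
  induction n with
  | zero => rfl
  | succ n ih =>
      rw [iterTerm, Term.realize_functions_apply₁, ih, Function.iterate_succ_apply']
      rfl

/-- The sentence asserting `f^[n] x = x` for all `x`. -/
def cycSen (n : ℕ) : unaryLang.Sentence :=
  BoundedFormula.all ((iterTerm n (Language.Term.var (Sum.inr 0))).bdEqual
    (Language.Term.var (Sum.inr 0)))

theorem realize_cycSen {M : Type*} [unaryLang.Structure M] (n : ℕ) :
    M ⊨ cycSen n ↔ ∀ x : M, uF^[n] x = x := by
  simp [cycSen, Sentence.Realize, Formula.Realize, realize_iterTerm, Term.realize, Fin.snoc]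

/-- The sentence asserting `f^[n] x ≠ x` for all `x`. -/
def freeSen (n : ℕ) : unaryLang.Sentence :=
  BoundedFormula.all (BoundedFormula.not
    ((iterTerm n (Language.Term.var (Sum.inr 0))).bdEqual (Language.Term.var (Sum.inr 0))))

theorem realize_freeSen {M : Type*} [unaryLang.Structure M] (n : ℕ) :
    M ⊨ freeSen n ↔ ∀ x : M, uF^[n] x ≠ x := by
  simp [freeSen, Sentence.Realize, Formula.Realize, realize_iterTerm, Term.realize, Fin.snoc]

theorem uF_iterate_cycle (k : ℕ) (n : ℕ) (x : ℕ × ZMod k) :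
    uF^[n] x = (x.1, x.2 + n) := by
  induction n with
  | zero => simp
  | succ n ih => rw [Function.iterate_succ_apply', ih, uF_cycle]; push_cast; ring_nf

theorem cycle_models_cycSen (k : ℕ) : (ℕ × ZMod k) ⊨ cycSen k := by
  rw [realize_cycSen]
  intro x
  rw [uF_iterate_cycle]
  simp

theorem cycle_models_freeSen (k : ℕ) {d : ℕ} (h0 : 0 < d) (hd : d < k) :
    (ℕ × ZMod k) ⊨ freeSen d := by
  rw [realize_freeSen]
  intro x hx
  rw [uF_iterate_cycle] at hx
  have h1 : x.2 + (d : ZMod k) = x.2 := congrArg Prod.snd hx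
  have h2 : ((d : ZMod k)) = 0 := by
    have h1' : x.2 + (d : ZMod k) = x.2 + 0 := by simpa using h1
    exact add_left_cancel h1'
  rw [ZMod.natCast_eq_zero_iff] at h2
  exact absurd (Nat.le_of_dvd h0 h2) (by omega)

section Orbit

variable {M : Type*} [unaryLang.Structure M] {k : ℕ}

theorem iter_kmul (hF : ∀ x : M, uF^[k] x = x) (q : ℕ) (x : M) : uF^[k * q] x = x := by
  induction q with
  | zero => simp
  | succ q ih =>
      rw [Nat.mul_succ, Function.iterate_add_apply, hF, ih]

theorem iter_mod (hF : ∀ x : M, uF^[k] x = x) (n : ℕ) (x : M) :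
    uF^[n] x = uF^[n % k] x := by
  conv_lhs => rw [← Nat.mod_add_div n k]
  rw [Function.iterate_add_apply, iter_kmul hF]

theorem free_inj_aux (hF : ∀ x : M, uF^[k] x = x)
    (hfree : ∀ d, 0 < d → d < k → ∀ x : M, uF^[d] x ≠ x)
    {a b : ℕ} (ha : a < k) (hb : b < k) (hab : a ≤ b) {x : M}
    (h : uF^[a] x = uF^[b] x) : a = b := by
  by_contra hne
  have hlt : a < b := lt_of_le_of_ne hab hne
  have h2 : uF^[k - a] (uF^[a] x) = uF^[k - a] (uF^[b] x) := congrArg _ h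
  rw [← Function.iterate_add_apply, ← Function.iterate_add_apply] at h2
  have hka : k - a + a = k := by omega
  rw [hka, hF] at h2
  rw [iter_mod hF] at h2
  have hmod : (k - a + b) % k = b - a := by
    have : k - a + b = k + (b - a) := by omega
    rw [this, Nat.add_mod_left, Nat.mod_eq_of_lt (by omega)]
  rw [hmod] at h2
  exact hfree (b - a) (by omega) (by omega) x h2.symm

theorem free_inj (hF : ∀ x : M, uF^[k] x = x)
    (hfree : ∀ d, 0 < d → d < k → ∀ x : M, uF^[d] x ≠ x)
    {a b : ℕ} (ha : a < k) (hb : b < k) {x : M}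
    (h : uF^[a] x = uF^[b] x) : a = b := by
  rcases le_total a b with hab | hab
  · exact free_inj_aux hF hfree ha hb hab h
  · exact (free_inj_aux hF hfree hb ha hab h.symm).symm

theorem orbit_decomp {N : Type u} [unaryLang.Structure N] (hk : 0 < k)
    (hF : ∀ x : N, uF^[k] x = x)
    (hfree : ∀ d, 0 < d → d < k → ∀ x : N, uF^[d] x ≠ x) :
    ∃ (Q : Type u) (e : Q × ZMod k ≃ N),
      ∀ q (j : ZMod k), e (q, j + 1) = uF (e (q, j)) := by
  haveI : NeZero k := ⟨hk.ne'⟩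
  let s : Setoid N :=
    ⟨fun x y => ∃ d, uF^[d] x = y, by
      constructor
      · exact fun x => ⟨0, rfl⟩
      · rintro x y ⟨d, rfl⟩
        refine ⟨k * d - d, ?_⟩
        rw [← Function.iterate_add_apply]
        have hdk : d ≤ k * d := Nat.le_mul_of_pos_left d hk
        have : k * d - d + d = k * d := by omega
        rw [this, iter_kmul hF]
      · rintro x y z ⟨d, rfl⟩ ⟨e, rfl⟩
        exact ⟨e + d, (Function.iterate_add_apply _ _ _ _)⟩⟩
  refine ⟨Quotient s, ?_, ?_⟩
  · refine Equiv.ofBijective (fun p => uF^[(p.2).val] p.1.out) ⟨?_, ?_⟩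
    · rintro ⟨q, j⟩ ⟨q', j'⟩ hg
      simp only at hg
      have hqq' : q = q' := by
        rw [← q.out_eq, ← q'.out_eq]
        apply Quotient.sound
        exact ⟨(k * j'.val - j'.val) + j.val, by
          rw [Function.iterate_add_apply, hg, ← Function.iterate_add_apply]
          have hdk : j'.val ≤ k * j'.val := Nat.le_mul_of_pos_left _ hk
          have : k * j'.val - j'.val + j'.val = k * j'.val := by omega
          rw [this, iter_kmul hF]⟩
      subst hqq'
      have := free_inj hF hfree j.val_lt j'.val_lt hg
      exact Prod.ext rfl (ZMod.val_injective k this)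
    · intro x
      obtain ⟨d, hd⟩ : s.r (⟦x⟧ : Quotient s).out x := Quotient.exact (Quotient.out_eq _)
      refine ⟨⟨⟦x⟧, (d : ZMod k)⟩, ?_⟩
      simp only [ZMod.val_natCast]
      rw [← iter_mod hF, hd]
  · intro q j
    show uF^[(j + 1).val] _ = uF (uF^[j.val] _)
    have h1 : j + 1 = ((j.val + 1 : ℕ) : ZMod k) := by
      push_cast [ZMod.natCast_val, ZMod.cast_id]; ring
    rw [h1, ZMod.val_natCast, ← iter_mod hF, Function.iterate_succ_apply']

end Orbit

theorem funMap_eq {P : Type*} [unaryLang.Structure P] (f : unaryLang.Functions 1)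
    (x : Fin 1 → P) : Structure.funMap f x = uF (x 0) := by
  cases f
  have hx : x = ![x 0] := by
    funext i
    fin_cases i
    simp
  rw [hx]
  rfl

theorem model_props (k : ℕ) {P : Type*} [unaryLang.Structure P]
    [P ⊨ unaryLang.completeTheory (ℕ × ZMod k)] :
    (∀ x : P, uF^[k] x = x) ∧ ∀ d, 0 < d → d < k → ∀ x : P, uF^[d] x ≠ x := by
  constructor
  · exact (realize_cycSen k).1 (Theory.realize_sentence_of_mem _
      (mem_completeTheory.2 (cycle_models_cycSen k)))
  · intro d h0 hd
    exact (realize_freeSen d).1 (Theory.realize_sentence_of_mem _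
      (mem_completeTheory.2 (cycle_models_freeSen k h0 hd)))

theorem card_orbits {Q : Type w} {P : Type w} {k : ℕ} (hk : 0 < k)
    {κ : Cardinal.{w}} (hκ : Cardinal.aleph0 ≤ κ) (e : Q × ZMod k ≃ P)
    (hP : Cardinal.mk P = κ) : Cardinal.mk Q = κ := by
  haveI : NeZero k := ⟨hk.ne'⟩
  have hcard : Cardinal.mk Q * k = κ := by
    rw [← hP, ← Cardinal.mk_congr e, Cardinal.mk_prod, Cardinal.mk_fintype (ZMod k), ZMod.card,
      Cardinal.lift_id', Cardinal.lift_natCast]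
  have hQinf : Cardinal.aleph0 ≤ Cardinal.mk Q := by
    by_contra h
    push_neg at h
    have h1 : Cardinal.mk Q * k < Cardinal.aleph0 :=
      Cardinal.mul_lt_aleph0 h (Cardinal.nat_lt_aleph0 k)
    rw [hcard] at h1
    exact absurd hκ (not_le_of_gt h1)
  rw [← hcard]
  exact (Cardinal.mul_eq_left hQinf (le_trans (le_of_lt (Cardinal.nat_lt_aleph0 k)) hQinf)
    (by exact_mod_cast hk.ne')).symm

/-- The complete first-order theory of the disjoint union of `ω`-many
`f`-cycles of length `k ≥ 1` is `κ`-categorical for every infinite cardinal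
`κ`; i.e. this structure is totally categorical. -/
theorem cycleStructure_totallyCategorical (k : ℕ) (hk : 1 ≤ k)
    (κ : Cardinal.{w}) (hκ : Cardinal.aleph0 ≤ κ) :
    κ.Categorical (unaryLang.completeTheory (ℕ × ZMod k)) := by
  intro M N hM hN
  obtain ⟨hFM, hfreeM⟩ := model_props k (P := M)
  obtain ⟨hFN, hfreeN⟩ := model_props k (P := N)
  obtain ⟨QM, eM, heM⟩ := orbit_decomp (N := M) hk hFM hfreeM
  obtain ⟨QN, eN, heN⟩ := orbit_decomp (N := N) hk hFN hfreeN
  have hQM : Cardinal.mk QM = κ := card_orbits hk hκ eM hM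
  have hQN : Cardinal.mk QN = κ := card_orbits hk hκ eN hN
  obtain ⟨g⟩ := Cardinal.eq.1 (hQM.trans hQN.symm)
  let E : M ≃ N := eM.symm.trans ((Equiv.prodCongr g (Equiv.refl (ZMod k))).trans eN)
  have hE : ∀ x : M, E (uF x) = uF (E x) := by
    intro x
    obtain ⟨⟨q, j⟩, rfl⟩ := eM.surjective x
    have h1 : E (eM (q, j + 1)) = eN (g q, j + 1) := by simp [E]
    have h2 : E (eM (q, j)) = eN (g q, j) := by simp [E]
    rw [← heM, h1, h2, heN]
  refine ⟨⟨E, ?_, ?_⟩⟩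
  · intro n f x
    match n, f with
    | 1, f =>
        rw [funMap_eq f x, funMap_eq f (E.toFun ∘ x)]
        exact hE (x 0)
  · intro n r
    exact r.elim
end
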